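/- For any finitely supported multi-index ν, ∑_{m ≤ ν} C(ν, m) · |m|! · (|ν − m| + 1)! = (|ν| + 2)! / 2. -/

import Mathlib

open Finset

lemma lemV (n N : ℕ) (f : ℕ → ℚ) :
    ∑ i ∈ Finset.range (n+1), ∑ l ∈ Finset.range (N+1),
      (n.choose i : ℚ) * (N.choose l) * f (i+l)
    = ∑ k ∈ Finset.range (n+N+1), ((n+N).choose k : ℚ) * f k := by
  have hrhs : ∀ k, ((n+N).choose k : ℚ) * f k
      = ∑ p ∈ Finset.HasAntidiagonal.antidiagonal k,
          (n.choose p.1 : ℚ) * (N.choose p.2) * f (p.1+p.2) := by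
    intro k
    rw [Nat.add_choose_eq, Nat.cast_sum, Finset.sum_mul]
    apply Finset.sum_congr rfl
    intro p hp
    rw [Finset.HasAntidiagonal.mem_antidiagonal] at hp
    rw [hp]
    push_cast
    ring
  simp_rw [hrhs]
  have hdisj : Set.PairwiseDisjoint ↑(Finset.range (n+N+1))
      (fun k => (Finset.HasAntidiagonal.antidiagonal k : Finset (ℕ × ℕ))) := by
    intro a _ b _ hab
    refine Finset.disjoint_left.2 ?_
    intro p hpa hpb; simp only [Finset.HasAntidiagonal.mem_antidiagonal] at hpa hpb
    
    exact hab (hpa ▸ hpb)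
  rw [← Finset.sum_biUnion hdisj, ← Finset.sum_product']
  apply Finset.sum_subset
  · intro p hp
    rw [Finset.mem_product, Finset.mem_range, Finset.mem_range] at hp
    rw [Finset.mem_biUnion]
    exact ⟨p.1 + p.2, Finset.mem_range.2 (by omega),
      Finset.HasAntidiagonal.mem_antidiagonal.2 rfl⟩
  · intro p hp hnp
    rw [Finset.mem_product, Finset.mem_range, Finset.mem_range] at hnp
    rcases not_and_or.1 hnp with h | h
    · rw [Nat.choose_eq_zero_of_lt (show n < p.1 by omega)]; simp
    · rw [Nat.choose_eq_zero_of_lt (show N < p.2 by omega)]; simp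


lemma lemB (n : ℕ) :
    2 * ∑ k ∈ Finset.range (n+1), n.choose k * (k.factorial * (n-k+1).factorial)
      = (n+2).factorial := by
  have h1 : ∀ k ∈ Finset.range (n+1),
      n.choose k * (k.factorial * (n-k+1).factorial) = n.factorial * (n-k+1) := by
    intro k hk
    rw [Finset.mem_range, Nat.lt_succ_iff] at hk
    rw [Nat.factorial_succ (n-k)]
    calc n.choose k * (k.factorial * ((n-k+1) * (n-k).factorial))
        = (n.choose k * k.factorial * (n-k).factorial) * (n-k+1) := by ring
      _ = n.factorial * (n-k+1) := by
          rw [Nat.choose_mul_factorial_mul_factorial hk]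
  rw [Finset.sum_congr rfl h1, ← Finset.mul_sum]
  have h2 : ∑ k ∈ Finset.range (n+1), (n-k+1) = ∑ j ∈ Finset.range (n+2), j := by
    rw [← Finset.sum_range_reflect]
    rw [Finset.sum_range_succ' (fun j => j) (n+1)]
    simp only [add_zero]
    apply Finset.sum_congr rfl
    intro j hj
    rw [Finset.mem_range, Nat.lt_succ_iff] at hj
    omega
  rw [h2]
  have h3 := Finset.sum_range_id_mul_two (n+2)
  rw [show (n+2).factorial = (n+2) * ((n+1) * n.factorial) by
    rw [Nat.factorial_succ, Nat.factorial_succ]]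
  calc 2 * (n.factorial * ∑ j ∈ Finset.range (n+2), j)
      = n.factorial * ((∑ j ∈ Finset.range (n+2), j) * 2) := by ring
    _ = n.factorial * ((n+2) * (n+1)) := by rw [h3]; norm_num
    _ = (n+2) * ((n+1) * n.factorial) := by ring


lemma lemA (ν : ℕ →₀ ℕ) : ∀ g : ℕ → ℚ,
    ∑ m ∈ Finset.Iic ν,
      (∏ j ∈ ν.support, ((ν j).choose (m j) : ℚ)) * g (m.sum fun _ n => n)
    = ∑ k ∈ Finset.range ((ν.sum fun _ n => n) + 1),
        (((ν.sum fun _ n => n)).choose k : ℚ) * g k := by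
  induction ν using Finsupp.induction with
  | zero =>
    intro g
    have h0 : Finset.Iic (0 : ℕ →₀ ℕ) = {0} := by
      ext x; simp [Finset.mem_Iic, le_zero_iff]
    simp [h0]
  | single_add a b f hab hb ih =>
    intro g
    have hfa : f a = 0 := Finsupp.notMem_support_iff.1 hab
    have hS : ∀ x y : ℕ →₀ ℕ,
        ((x+y).sum fun _ n => n) = (x.sum fun _ n => n) + (y.sum fun _ n => n) :=
      fun x y => Finsupp.sum_add_index' (fun _ => rfl) (fun _ _ _ => rfl)
    have hsingle : ∀ i : ℕ, ((Finsupp.single a i).sum fun _ n => n) = i :=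
      fun i => Finsupp.sum_single_index rfl
    have hsupp : (Finsupp.single a b + f).support = insert a f.support := by
      rw [Finsupp.support_add_eq, Finsupp.support_single_ne_zero _ hb, Finset.insert_eq]
      rw [Finsupp.support_single_ne_zero _ hb]
      simpa using hab
    have key : ∑ m ∈ Finset.Iic (Finsupp.single a b + f),
        (∏ j ∈ (Finsupp.single a b + f).support,
          (((Finsupp.single a b + f) j).choose (m j) : ℚ)) * g (m.sum fun _ n => n)
      = ∑ p ∈ Finset.range (b+1) ×ˢ Finset.Iic f,
          (b.choose p.1 : ℚ) *
            ((∏ j ∈ f.support, ((f j).choose (p.2 j) : ℚ)) *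
              g (p.1 + (p.2.sum fun _ n => n))) := by
      apply Finset.sum_nbij' (i := fun m => (m a, m.erase a))
        (j := fun p => Finsupp.single a p.1 + p.2)
      · intro m hm
        rw [Finset.mem_Iic] at hm
        rw [Finset.mem_product, Finset.mem_range]
        constructor
        · have := Finsupp.le_def.1 hm a
          simp [hfa] at this
          omega
        · rw [Finset.mem_Iic, Finsupp.le_def]
          intro j
          by_cases hja : j = a
          · subst hja; simp
          · have := Finsupp.le_def.1 hm j
            simpa [Finsupp.single_apply, Ne.symm hja, Finsupp.erase_ne hja] using this
      · intro p hp
        rw [Finset.mem_product, Finset.mem_range] at hp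
        rw [Finset.mem_Iic, Finsupp.le_def]
        intro j
        have h2 := Finsupp.le_def.1 (Finset.mem_Iic.1 hp.2) j
        by_cases hja : j = a
        · subst hja
          simp only [Finsupp.add_apply, Finsupp.single_eq_same]
          omega
        · simpa [Finsupp.single_apply, Ne.symm hja] using h2
      · intro m _
        exact Finsupp.single_add_erase a m
      · intro p hp
        rw [Finset.mem_product, Finset.mem_Iic] at hp
        have hpa : p.2 a = 0 := by
          have := Finsupp.le_def.1 hp.2 a
          omega
        have h1 : (Finsupp.single a p.1 + p.2) a = p.1 := by
          simp [hpa]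
        have h2 : (Finsupp.single a p.1 + p.2).erase a = p.2 := by
          rw [Finsupp.erase_add, Finsupp.erase_single, zero_add,
            Finsupp.erase_of_notMem_support (Finsupp.notMem_support_iff.2 hpa)]
        rw [h1, h2]
      · intro m hm
        rw [Finset.mem_Iic] at hm
        have hsum : (m.sum fun _ n => n) = m a + ((m.erase a).sum fun _ n => n) := by
          conv_lhs => rw [← Finsupp.single_add_erase a m]
          rw [hS, hsingle]
        have hva : (Finsupp.single a b + f) a = b := by simp [hfa]
        rw [hsupp, Finset.prod_insert hab, hva, hsum]
        have hprod : ∏ j ∈ f.support, (((Finsupp.single a b + f) j).choose (m j) : ℚ)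
            = ∏ j ∈ f.support, ((f j).choose ((m.erase a) j) : ℚ) := by
          apply Finset.prod_congr rfl
          intro j hj
          have hja : j ≠ a := fun h => hab (h ▸ hj)
          rw [Finsupp.erase_ne hja]
          congr 2
          simp [Finsupp.single_apply, Ne.symm hja]
        rw [hprod]
        ring
    rw [key, Finset.sum_product]
    have hstep : ∀ i ∈ Finset.range (b+1),
        ∑ m' ∈ Finset.Iic f, (b.choose i : ℚ) *
          ((∏ j ∈ f.support, ((f j).choose (m' j) : ℚ)) * g (i + (m'.sum fun _ n => n)))
        = ∑ l ∈ Finset.range ((f.sum fun _ n => n)+1),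
            (b.choose i : ℚ) * (((f.sum fun _ n => n).choose l : ℚ) * g (i + l)) := by
      intro i _
      rw [← Finset.mul_sum, ← Finset.mul_sum, ih (fun t => g (i + t))]
    rw [Finset.sum_congr rfl hstep]
    have hSν : ((Finsupp.single a b + f).sum fun _ n => n) = b + (f.sum fun _ n => n) := by
      rw [hS, hsingle]
    rw [hSν, ← lemV b (f.sum fun _ n => n) g]
    apply Finset.sum_congr rfl
    intro i _
    apply Finset.sum_congr rfl
    intro l _
    ring

/-- For any finitely supported multi-index `ν`,
`∑_{m ≤ ν} C(ν, m) · |m|! · (|ν − m| + 1)! = (|ν| + 2)!/2`. -/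
theorem sum_multiindex_factorial_two (ν : ℕ →₀ ℕ) :
    (∑ m ∈ Finset.Iic ν,
      ((∏ j ∈ ν.support, (ν j).choose (m j)) : ℚ) *
        Nat.factorial (m.sum fun _ n => n) *
        Nat.factorial (((ν - m).sum fun _ n => n) + 1))
    = (Nat.factorial ((ν.sum fun _ n => n) + 2) : ℚ) / 2 := by
  set n := ν.sum fun _ n => n with hn
  set g : ℕ → ℚ := fun k => (k.factorial : ℚ) * ((n - k + 1).factorial : ℚ) with hg
  have hS : ∀ x y : ℕ →₀ ℕ,
      ((x+y).sum fun _ n => n) = (x.sum fun _ n => n) + (y.sum fun _ n => n) :=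
    fun x y => Finsupp.sum_add_index' (fun _ => rfl) (fun _ _ _ => rfl)
  have hcongr : ∀ m ∈ Finset.Iic ν,
      ((∏ j ∈ ν.support, (ν j).choose (m j)) : ℚ) *
        Nat.factorial (m.sum fun _ n => n) *
        Nat.factorial (((ν - m).sum fun _ n => n) + 1)
      = (∏ j ∈ ν.support, ((ν j).choose (m j) : ℚ)) * g (m.sum fun _ n => n) := by
    intro m hm
    rw [Finset.mem_Iic] at hm
    have hsub : ((ν - m).sum fun _ n => n) = n - (m.sum fun _ n => n) := by
      have hadd : (ν - m) + m = ν := tsub_add_cancel_of_le hm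
      have h2 := congrArg (fun x : ℕ →₀ ℕ => x.sum fun _ n => n) hadd
      simp only [hS] at h2
      omega
    rw [hsub, hg]
    push_cast
    ring
  rw [Finset.sum_congr rfl hcongr, lemA ν g]
  rw [eq_div_iff (two_ne_zero)]
  calc (∑ k ∈ Finset.range (n+1), ((n.choose k : ℚ)) * g k) * 2
      = ((2 * ∑ k ∈ Finset.range (n+1),
          n.choose k * (k.factorial * (n-k+1).factorial) : ℕ) : ℚ) := by
        rw [hg]; push_cast; ring
    _ = (((n+2).factorial : ℕ) : ℚ) := by rw [lemB n]
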